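/- Let k ≥ 1 be an integer and set h = 1/k. Let u : ℝ → ℝ be twice continuously differentiable on [0,1] with u(0) = u(1) = 0, and let I_k u be the piecewise linear interpolant of u on the mesh {0, h, 2h, …, 1} (affine on each interval [ih, (i+1)h] with (I_k u)(ih) = u(ih)). Then ∫_0^1 (u(x) − (I_k u)(x))² dx ≤ (h/π)⁴ · ∫_0^1 u″(x)² dx. -/

import Mathlib

open MeasureTheory intervalIntegral Real Set Filter

/-- Cauchy–Schwarz for interval integrals of continuous functions. -/
lemma cs_integral {a b : ℝ} (hab : a ≤ b) {φ ψ : ℝ → ℝ}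
    (hφ : ContinuousOn φ (Set.Icc a b)) (hψ : ContinuousOn ψ (Set.Icc a b)) :
    (∫ x in a..b, φ x * ψ x) ^ 2 ≤ (∫ x in a..b, φ x ^ 2) * ∫ x in a..b, ψ x ^ 2 := by
  have hIcc : Set.uIcc a b = Set.Icc a b := Set.uIcc_of_le hab
  have hφ' : ContinuousOn φ (Set.uIcc a b) := hIcc ▸ hφ
  have hψ' : ContinuousOn ψ (Set.uIcc a b) := hIcc ▸ hψ
  set A := ∫ x in a..b, ψ x ^ 2 with hA
  set B := ∫ x in a..b, φ x * ψ x with hB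
  set C := ∫ x in a..b, φ x ^ 2 with hC
  have key : ∀ t : ℝ, 0 ≤ A * (t * t) + (2 * B) * t + C := by
    intro t
    have : A * (t * t) + (2 * B) * t + C = ∫ x in a..b, (t * ψ x + φ x) ^ 2 := by
      have h1 : IntervalIntegrable (fun x => ψ x ^ 2) volume a b :=
        ((hψ'.pow 2)).intervalIntegrable
      have h2 : IntervalIntegrable (fun x => φ x * ψ x) volume a b :=
        (hφ'.mul hψ').intervalIntegrable
      have h3 : IntervalIntegrable (fun x => φ x ^ 2) volume a b :=
        ((hφ'.pow 2)).intervalIntegrable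
      rw [show (fun x => (t * ψ x + φ x) ^ 2) = fun x =>
          (t * t) * ψ x ^ 2 + (2 * t) * (φ x * ψ x) + φ x ^ 2 by funext x; ring]
      rw [intervalIntegral.integral_add ((h1.const_mul _).add (h2.const_mul _)) h3,
        intervalIntegral.integral_add (h1.const_mul _) (h2.const_mul _),
        intervalIntegral.integral_const_mul, intervalIntegral.integral_const_mul]
      ring
    rw [this]
    apply intervalIntegral.integral_nonneg hab
    intro x _; positivity
  have := discrim_le_zero key
  rw [discrim] at this
  nlinarith [this]

lemma wirtinger {a b : ℝ} (hab : a < b) {f f' : ℝ → ℝ}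
    (hf : ∀ x ∈ Set.Icc a b, HasDerivWithinAt f (f' x) (Set.Icc a b) x)
    (hf' : ContinuousOn f' (Set.Icc a b)) (ha : f a = 0) (hb : f b = 0) :
    ∫ x in a..b, f x ^ 2 ≤ ((b - a) / Real.pi) ^ 2 * ∫ x in a..b, f' x ^ 2 := by
  have hL : (0:ℝ) < b - a := sub_pos.2 hab
  set c : ℝ := Real.pi / (b - a) with hc_def
  have hc : 0 < c := div_pos Real.pi_pos hL
  have hcL : c * (b - a) = Real.pi := div_mul_cancel₀ _ hL.ne'
  set g : ℝ → ℝ := fun x => Real.cos (c * (x - a)) / Real.sin (c * (x - a)) with hg_def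
  set G : ℝ → ℝ := fun x => f x ^ 2 * g x with hG_def
  have hfc : ContinuousOn f (Set.Icc a b) := fun x hx => (hf x hx).continuousWithinAt
  have hmem2 : Set.Ioo (0:ℝ) ((b-a)/2) ∈ nhdsWithin (0:ℝ) (Set.Ioi 0) :=
    Ioo_mem_nhdsGT_of_mem ⟨le_refl _, by linarith⟩
  -- bound on f'
  obtain ⟨M, hM⟩ : ∃ M, ∀ x ∈ Set.Icc a b, ‖f' x‖ ≤ M :=
    (isCompact_Icc.exists_bound_of_continuousOn hf')
  have hM0 : 0 ≤ M := le_trans (norm_nonneg _) (hM a (Set.left_mem_Icc.2 hab.le))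
  -- Lipschitz-type bounds on f near the endpoints
  have hflip : ∀ x ∈ Set.Icc a b, ∀ y ∈ Set.Icc a b, |f y - f x| ≤ M * |y - x| := by
    intro x hx y hy
    simpa [Real.norm_eq_abs] using
      (convex_Icc a b).norm_image_sub_le_of_norm_hasDerivWithin_le hf hM hx hy
  -- sin positivity on the open interval
  have hsin_pos : ∀ x ∈ Set.Ioo a b, 0 < Real.sin (c * (x - a)) := by
    intro x hx
    apply Real.sin_pos_of_pos_of_lt_pi
    · exact mul_pos hc (sub_pos.2 hx.1)
    · calc c * (x - a) < c * (b - a) := by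
            exact mul_lt_mul_of_pos_left (by linarith [hx.2]) hc
        _ = Real.pi := hcL
  -- the key inequality on shrunk intervals
  have key : ∀ ε ∈ Set.Ioo (0:ℝ) ((b - a)/2),
      c ^ 2 * ∫ x in (a+ε)..(b-ε), f x ^ 2 ≤
        (∫ x in (a+ε)..(b-ε), f' x ^ 2) - c * (G (b-ε) - G (a+ε)) := by
    intro ε hε
    obtain ⟨hε0, hε2⟩ := hε
    set α := a + ε
    set β := b - ε
    have hαβ : α ≤ β := by simp only [α, β]; linarith
    have hsub : Set.Icc α β ⊆ Set.Ioo a b := fun x hx =>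
      ⟨by simp only [α] at hx; linarith [hx.1], by simp only [β] at hx; linarith [hx.2]⟩
    have hsub' : Set.Icc α β ⊆ Set.Icc a b := hsub.trans Set.Ioo_subset_Icc_self
    have huIcc : Set.uIcc α β = Set.Icc α β := Set.uIcc_of_le hαβ
    -- derivative facts on Icc α β
    have hsin_ne : ∀ x ∈ Set.Icc α β, Real.sin (c * (x - a)) ≠ 0 := fun x hx =>
      (hsin_pos x (hsub hx)).ne'
    have hfd : ∀ x ∈ Set.Icc α β, HasDerivAt f (f' x) x := by
      intro x hx
      exact (hf x (hsub' hx)).hasDerivAt (Icc_mem_nhds (hsub hx).1 (hsub hx).2)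
    have hgd : ∀ x ∈ Set.Icc α β,
        HasDerivAt g (-c / Real.sin (c * (x - a)) ^ 2) x := by
      intro x hx
      have h1 : HasDerivAt (fun y => c * (y - a)) c x := by
        simpa using ((hasDerivAt_id x).sub_const a).const_mul c
      have hs : HasDerivAt (fun y => Real.sin (c * (y - a)))
          (Real.cos (c * (x - a)) * c) x := (Real.hasDerivAt_sin _).comp x h1
      have hco : HasDerivAt (fun y => Real.cos (c * (y - a)))
          (-Real.sin (c * (x - a)) * c) x := (Real.hasDerivAt_cos _).comp x h1
      have h2 := Real.sin_sq_add_cos_sq (c * (x - a))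
      have hnum : (-Real.sin (c * (x - a)) * c * Real.sin (c * (x - a)) -
          Real.cos (c * (x - a)) * (Real.cos (c * (x - a)) * c)) = -c := by
        linear_combination (-c) * h2
      have := hco.div hs (hsin_ne x hx)
      rw [hnum] at this
      exact this
    have hGd : ∀ x ∈ Set.Icc α β,
        HasDerivAt G ((fun x => 2 * f x ^ 1 * f' x * g x +
          f x ^ 2 * (-c / Real.sin (c * (x - a)) ^ 2)) x) x := by
      intro x hx
      exact ((hfd x hx).pow 2).mul (hgd x hx)
    set Gd : ℝ → ℝ := fun x => 2 * f x ^ 1 * f' x * g x + f x ^ 2 * (-c / Real.sin (c * (x - a)) ^ 2)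
      with hGd_def
    -- continuity facts on Icc α β
    have hgc : ContinuousOn g (Set.Icc α β) := by
      apply ContinuousOn.div
      · exact (Real.continuous_cos.comp (continuous_const.mul (continuous_id.sub continuous_const))).continuousOn
      · exact (Real.continuous_sin.comp (continuous_const.mul (continuous_id.sub continuous_const))).continuousOn
      · exact hsin_ne
    have hfcαβ : ContinuousOn f (Set.Icc α β) := hfc.mono hsub'
    have hf'cαβ : ContinuousOn f' (Set.Icc α β) := hf'.mono hsub'
    have hGdc : ContinuousOn Gd (Set.Icc α β) := by
      apply ContinuousOn.add
      · exact ((continuousOn_const.mul (hfcαβ.pow 1)).mul hf'cαβ).mul hgc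
      · exact (hfcαβ.pow 2).mul <| ContinuousOn.div continuousOn_const
          ((Real.continuous_sin.comp (continuous_const.mul (continuous_id.sub continuous_const))).continuousOn.pow 2)
          (fun x hx => pow_ne_zero 2 (hsin_ne x hx))
    have hGdint : IntervalIntegrable Gd volume α β := (huIcc ▸ hGdc).intervalIntegrable
    have hftc : ∫ x in α..β, Gd x = G β - G α := by
      apply intervalIntegral.integral_eq_sub_of_hasDerivAt
      · intro x hx; exact hGd x (huIcc ▸ hx)
      · exact hGdint
    -- pointwise identity
    have hpt : ∀ x ∈ Set.uIcc α β,
        f' x ^ 2 - c ^ 2 * f x ^ 2 = (f' x - c * f x * g x) ^ 2 + c * Gd x := by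
      intro x hx
      rw [huIcc] at hx
      have hsne := hsin_ne x hx
      have h2 := Real.sin_sq_add_cos_sq (c * (x - a))
      have h3 : g x ^ 2 - 1 / Real.sin (c * (x - a)) ^ 2 = -1 := by
        simp only [hg_def]
        field_simp
        linear_combination h2
      simp only [hGd_def]
      linear_combination (-(c ^ 2 * f x ^ 2)) * h3
    -- integrate the identity
    have hint1 : IntervalIntegrable (fun x => f x ^ 2) volume α β :=
      (huIcc ▸ (hfcαβ.pow 2)).intervalIntegrable
    have hint2 : IntervalIntegrable (fun x => f' x ^ 2) volume α β :=
      (huIcc ▸ (hf'cαβ.pow 2)).intervalIntegrable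
    have hint3 : IntervalIntegrable (fun x => (f' x - c * f x * g x) ^ 2) volume α β := by
      refine (ContinuousOn.intervalIntegrable ?_)
      refine huIcc ▸ ((hf'cαβ.sub ((continuousOn_const.mul hfcαβ).mul hgc)).pow 2)
    have heq : ∫ x in α..β, (f' x ^ 2 - c ^ 2 * f x ^ 2) =
        (∫ x in α..β, (f' x - c * f x * g x) ^ 2) + c * (G β - G α) := by
      rw [intervalIntegral.integral_congr hpt, intervalIntegral.integral_add hint3
        (hGdint.const_mul c), intervalIntegral.integral_const_mul, hftc]
    rw [intervalIntegral.integral_sub hint2 (hint1.const_mul _),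
      intervalIntegral.integral_const_mul] at heq
    have hnn : 0 ≤ ∫ x in α..β, (f' x - c * f x * g x) ^ 2 :=
      intervalIntegral.integral_nonneg hαβ (fun x _ => sq_nonneg _)
    linarith [heq, hnn]
  -- bounds for tails
  have hfbd : ∀ x ∈ Set.Icc a b, |f x| ≤ M * (b - a) := by
    intro x hx
    have := hflip a (Set.left_mem_Icc.2 hab.le) x hx
    rw [ha] at this
    simp only [sub_zero] at this
    calc |f x| ≤ M * |x - a| := this
      _ ≤ M * (b - a) := by
          apply mul_le_mul_of_nonneg_left _ hM0
          rw [abs_of_nonneg (by linarith [hx.1])]; linarith [hx.2]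
  -- tail convergence lemma
  have tail : ∀ (φ : ℝ → ℝ) (K : ℝ), (∀ x ∈ Set.Icc a b, ‖φ x‖ ≤ K) →
      ContinuousOn φ (Set.Icc a b) →
      Filter.Tendsto (fun ε => ∫ x in (a+ε)..(b-ε), φ x) (nhdsWithin 0 (Set.Ioi 0))
        (nhds (∫ x in a..b, φ x)) := by
    intro φ K hK hφc
    have hint : IntervalIntegrable φ volume a b :=
      ((Set.uIcc_of_le hab.le ▸ hφc)).intervalIntegrable
    have hmem : Set.Ioo (0:ℝ) ((b-a)/2) ∈ nhdsWithin (0:ℝ) (Set.Ioi 0) :=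
      Ioo_mem_nhdsGT_of_mem ⟨le_refl _, by linarith⟩
    have hsplit : ∀ ε ∈ Set.Ioo (0:ℝ) ((b-a)/2),
        (∫ x in (a+ε)..(b-ε), φ x) =
          (∫ x in a..b, φ x) - (∫ x in a..(a+ε), φ x) - (∫ x in (b-ε)..b, φ x) := by
      intro ε hε
      have sub1 : Set.uIcc a (a+ε) ⊆ Set.uIcc a b := by
        rw [Set.uIcc_of_le hab.le, Set.uIcc_of_le (by linarith [hε.1])]
        exact Set.Icc_subset_Icc le_rfl (by linarith [hε.2])
      have sub2 : Set.uIcc (a+ε) (b-ε) ⊆ Set.uIcc a b := by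
        rw [Set.uIcc_of_le hab.le, Set.uIcc_of_le (by linarith [hε.1, hε.2])]
        exact Set.Icc_subset_Icc (by linarith [hε.1]) (by linarith [hε.1])
      have sub3 : Set.uIcc (b-ε) b ⊆ Set.uIcc a b := by
        rw [Set.uIcc_of_le hab.le, Set.uIcc_of_le (by linarith [hε.1])]
        exact Set.Icc_subset_Icc (by linarith [hε.2]) le_rfl
      have i1 := hint.mono_set sub1
      have i2 := hint.mono_set sub2
      have i3 := hint.mono_set sub3
      have e1 : (∫ x in a..(a+ε), φ x) + (∫ x in (a+ε)..(b-ε), φ x) =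
          ∫ x in a..(b-ε), φ x := intervalIntegral.integral_add_adjacent_intervals i1 i2
      have e2 : (∫ x in a..(b-ε), φ x) + (∫ x in (b-ε)..b, φ x) =
          ∫ x in a..b, φ x := intervalIntegral.integral_add_adjacent_intervals (i1.trans i2) i3
      linarith [e1, e2]
    have t1 : Filter.Tendsto (fun ε => ∫ x in a..(a+ε), φ x) (nhdsWithin 0 (Set.Ioi 0))
        (nhds 0) := by
      apply squeeze_zero_norm'
      · filter_upwards [hmem] with ε hε
        calc ‖∫ x in a..(a+ε), φ x‖ ≤ K * |(a+ε) - a| := by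
              apply intervalIntegral.norm_integral_le_of_norm_le_const
              intro x hx
              apply hK
              rw [Set.uIoc_of_le (by linarith [hε.1])] at hx
              exact ⟨hx.1.le, by linarith [hx.2, hε.2]⟩
          _ = K * ε := by rw [add_sub_cancel_left, abs_of_pos hε.1]
      · have : Filter.Tendsto (fun ε : ℝ => K * ε) (nhds 0) (nhds (K * 0)) :=
          (continuous_const.mul continuous_id).tendsto 0
        rw [mul_zero] at this
        exact this.mono_left nhdsWithin_le_nhds
    have t2 : Filter.Tendsto (fun ε => ∫ x in (b-ε)..b, φ x) (nhdsWithin 0 (Set.Ioi 0))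
        (nhds 0) := by
      apply squeeze_zero_norm'
      · filter_upwards [hmem] with ε hε
        calc ‖∫ x in (b-ε)..b, φ x‖ ≤ K * |b - (b-ε)| := by
              apply intervalIntegral.norm_integral_le_of_norm_le_const
              intro x hx
              apply hK
              rw [Set.uIoc_of_le (by linarith [hε.1])] at hx
              exact ⟨by linarith [hx.1.le, hε.2], hx.2⟩
          _ = K * ε := by rw [sub_sub_cancel, abs_of_pos hε.1]
      · have : Filter.Tendsto (fun ε : ℝ => K * ε) (nhds 0) (nhds (K * 0)) :=
          (continuous_const.mul continuous_id).tendsto 0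
        rw [mul_zero] at this
        exact this.mono_left nhdsWithin_le_nhds
    have hconst : Filter.Tendsto (fun _ : ℝ => ∫ x in a..b, φ x) (nhdsWithin 0 (Set.Ioi 0))
        (nhds (∫ x in a..b, φ x)) := tendsto_const_nhds
    have := (hconst.sub t1).sub t2
    rw [sub_zero, sub_zero] at this
    apply this.congr'
    filter_upwards [hmem] with ε hε
    exact (hsplit ε hε).symm
  -- the boundary term tends to zero
  have hBd : Filter.Tendsto (fun ε => c * (G (b-ε) - G (a+ε))) (nhdsWithin 0 (Set.Ioi 0))
      (nhds 0) := by
    apply squeeze_zero_norm'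
    · filter_upwards [hmem2] with ε hε
      set t := c * ε with ht_def
      have ht0 : 0 < t := mul_pos hc hε.1
      have ht2 : t < Real.pi / 2 := by
        have : c * ε < c * ((b-a)/2) := mul_lt_mul_of_pos_left hε.2 hc
        calc t < c * ((b-a)/2) := this
          _ = Real.pi / 2 := by rw [show c * ((b-a)/2) = c * (b-a) / 2 by ring, hcL]
      have hsin : 0 < Real.sin t := Real.sin_pos_of_pos_of_lt_pi ht0 (by linarith [Real.pi_pos])
      have hcos : 0 < Real.cos t := Real.cos_pos_of_mem_Ioo ⟨by linarith [Real.pi_pos], ht2⟩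
      have hcot : Real.cos t / Real.sin t ≤ 1 / t := by
        rw [div_le_div_iff₀ hsin ht0]
        have := Real.lt_tan ht0 ht2
        rw [Real.tan_eq_sin_div_cos, lt_div_iff₀ hcos] at this
        nlinarith [this]
      -- bound |g (a+ε)|
      have hga : |g (a+ε)| ≤ 1 / t := by
        have : g (a+ε) = Real.cos t / Real.sin t := by
          simp only [hg_def, add_sub_cancel_left, ht_def]
        rw [this, abs_of_pos (div_pos hcos hsin)]
        exact hcot
      have hgb : |g (b-ε)| ≤ 1 / t := by
        have harg : c * ((b-ε) - a) = Real.pi - t := by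
          rw [ht_def, show c * ((b-ε) - a) = c * (b-a) - c * ε by ring, hcL]
        have : g (b-ε) = -(Real.cos t / Real.sin t) := by
          simp only [hg_def, harg, Real.cos_pi_sub, Real.sin_pi_sub, neg_div]
        rw [this, abs_neg, abs_of_pos (div_pos hcos hsin)]
        exact hcot
      -- bound f near endpoints
      have hamem : a + ε ∈ Set.Icc a b := ⟨by linarith [hε.1], by linarith [hε.2]⟩
      have hbmem : b - ε ∈ Set.Icc a b := ⟨by linarith [hε.2], by linarith [hε.1]⟩
      have hfa : |f (a+ε)| ≤ M * ε := by
        have := hflip a (Set.left_mem_Icc.2 hab.le) (a+ε) hamem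
        rw [ha] at this
        simpa [abs_of_pos hε.1] using this
      have hfb : |f (b-ε)| ≤ M * ε := by
        have := hflip b (Set.right_mem_Icc.2 hab.le) (b-ε) hbmem
        rw [hb] at this
        have h5 : |(b-ε) - b| = ε := by rw [show (b-ε) - b = -ε by ring, abs_neg, abs_of_pos hε.1]
        rw [sub_zero, h5] at this
        exact this
      -- assemble
      have hGa : |G (a+ε)| ≤ M^2 * ε / c := by
        have : |G (a+ε)| = f (a+ε)^2 * |g (a+ε)| := by
          rw [hG_def]; simp [abs_mul, abs_pow, sq_abs]
        rw [this]
        calc f (a+ε)^2 * |g (a+ε)| ≤ (M*ε)^2 * (1/t) := by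
              apply mul_le_mul _ hga (abs_nonneg _) (by positivity)
              calc f (a+ε)^2 = |f (a+ε)|^2 := (sq_abs _).symm
                _ ≤ (M*ε)^2 := by apply pow_le_pow_left₀ (abs_nonneg _) hfa
          _ = M^2 * ε / c := by rw [ht_def]; field_simp
      have hGb : |G (b-ε)| ≤ M^2 * ε / c := by
        have : |G (b-ε)| = f (b-ε)^2 * |g (b-ε)| := by
          rw [hG_def]; simp [abs_mul, abs_pow, sq_abs]
        rw [this]
        calc f (b-ε)^2 * |g (b-ε)| ≤ (M*ε)^2 * (1/t) := by
              apply mul_le_mul _ hgb (abs_nonneg _) (by positivity)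
              calc f (b-ε)^2 = |f (b-ε)|^2 := (sq_abs _).symm
                _ ≤ (M*ε)^2 := by apply pow_le_pow_left₀ (abs_nonneg _) hfb
          _ = M^2 * ε / c := by rw [ht_def]; field_simp
      calc ‖c * (G (b-ε) - G (a+ε))‖ = c * |G (b-ε) - G (a+ε)| := by
            rw [norm_mul, Real.norm_eq_abs, Real.norm_eq_abs, abs_of_pos hc]
        _ ≤ c * (|G (b-ε)| + |G (a+ε)|) := by
            apply mul_le_mul_of_nonneg_left (abs_sub _ _) hc.le
        _ ≤ c * (M^2 * ε / c + M^2 * ε / c) := by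
            apply mul_le_mul_of_nonneg_left (add_le_add hGb hGa) hc.le
        _ = 2 * M^2 * ε := by field_simp; ring
    · have : Filter.Tendsto (fun ε : ℝ => 2 * M^2 * ε) (nhds 0) (nhds (2 * M^2 * 0)) :=
        (continuous_const.mul continuous_id).tendsto 0
      rw [mul_zero] at this
      exact this.mono_left nhdsWithin_le_nhds
  -- pass to the limit
  have hK2 : ∀ x ∈ Set.Icc a b, ‖f x ^ 2‖ ≤ (M * (b-a))^2 := by
    intro x hx
    rw [Real.norm_eq_abs, abs_pow]
    exact pow_le_pow_left₀ (abs_nonneg _) (hfbd x hx) 2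
  have hK2' : ∀ x ∈ Set.Icc a b, ‖f' x ^ 2‖ ≤ M^2 := by
    intro x hx
    rw [Real.norm_eq_abs, abs_pow]
    have habs : |f' x| ≤ M := by simpa using hM x hx
    exact pow_le_pow_left₀ (abs_nonneg _) habs 2
  have T1 := (tail (fun x => f x ^ 2) ((M * (b-a))^2) hK2 (hfc.pow 2)).const_mul (c^2)
  have T2 := (tail (fun x => f' x ^ 2) (M^2) hK2' (hf'.pow 2)).sub hBd
  rw [sub_zero] at T2
  have hfin : c^2 * ∫ x in a..b, f x ^ 2 ≤ ∫ x in a..b, f' x ^ 2 := by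
    apply le_of_tendsto_of_tendsto T1 T2
    filter_upwards [hmem2] with ε hε
    exact key ε hε
  have hpi : Real.pi ≠ 0 := Real.pi_ne_zero
  have heq2 : ((b - a) / Real.pi) ^ 2 * (∫ x in a..b, f' x ^ 2) =
      (∫ x in a..b, f' x ^ 2) / c^2 := by
    rw [hc_def]; field_simp
  rw [heq2, le_div_iff₀ (by positivity)]
  linarith [hfin]

lemma key_interval {a b : ℝ} (hab : a < b) {e e' e'' : ℝ → ℝ}
    (he : ∀ x ∈ Set.Icc a b, HasDerivWithinAt e (e' x) (Set.Icc a b) x)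
    (he' : ∀ x ∈ Set.Icc a b, HasDerivWithinAt e' (e'' x) (Set.Icc a b) x)
    (hc : ContinuousOn e'' (Set.Icc a b)) (hea : e a = 0) (heb : e b = 0) :
    ∫ x in a..b, e x ^ 2 ≤ ((b - a) / Real.pi) ^ 4 * ∫ x in a..b, e'' x ^ 2 := by
  have hec : ContinuousOn e (Set.Icc a b) := fun x hx => (he x hx).continuousWithinAt
  have he'c : ContinuousOn e' (Set.Icc a b) := fun x hx => (he' x hx).continuousWithinAt
  set X := ∫ x in a..b, e x ^ 2 with hX
  set Y := ∫ x in a..b, e' x ^ 2 with hY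
  set Z := ∫ x in a..b, e'' x ^ 2 with hZ
  have huIcc : Set.uIcc a b = Set.Icc a b := Set.uIcc_of_le hab.le
  have hX0 : 0 ≤ X := intervalIntegral.integral_nonneg hab.le (fun x _ => sq_nonneg _)
  have hY0 : 0 ≤ Y := intervalIntegral.integral_nonneg hab.le (fun x _ => sq_nonneg _)
  have hZ0 : 0 ≤ Z := intervalIntegral.integral_nonneg hab.le (fun x _ => sq_nonneg _)
  set κ := ((b - a) / Real.pi) ^ 2 with hκ
  have hκ0 : 0 < κ := by
    apply pow_pos
    exact div_pos (sub_pos.2 hab) Real.pi_pos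
  have W1 : X ≤ κ * Y := wirtinger hab he he'c hea heb
  -- integration by parts:  Y = -∫ e e''
  have hibp : Y = -∫ x in a..b, e x * e'' x := by
    have hprod : ∀ x ∈ Set.Ioo a b, HasDerivAt (fun y => e y * e' y)
        (e' x ^ 2 + e x * e'' x) x := by
      intro x hx
      have h1 : HasDerivAt e (e' x) x :=
        (he x (Set.Ioo_subset_Icc_self hx)).hasDerivAt (Icc_mem_nhds hx.1 hx.2)
      have h2 : HasDerivAt e' (e'' x) x :=
        (he' x (Set.Ioo_subset_Icc_self hx)).hasDerivAt (Icc_mem_nhds hx.1 hx.2)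
      have := h1.mul h2
      rw [sq]
      exact this
    have hcont : ContinuousOn (fun y => e y * e' y) (Set.Icc a b) := hec.mul he'c
    have hint : IntervalIntegrable (fun x => e' x ^ 2 + e x * e'' x) volume a b := by
      apply ContinuousOn.intervalIntegrable
      rw [huIcc]
      exact (he'c.pow 2).add (hec.mul hc)
    have := intervalIntegral.integral_eq_sub_of_hasDeriv_right_of_le hab.le hcont
      (fun x hx => (hprod x hx).hasDerivWithinAt) hint
    rw [heb, hea, zero_mul, zero_mul, sub_zero] at this
    have hsplit : ∫ x in a..b, (e' x ^ 2 + e x * e'' x) = Y + ∫ x in a..b, e x * e'' x := by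
      rw [intervalIntegral.integral_add ((huIcc ▸ (he'c.pow 2)).intervalIntegrable)
        ((huIcc ▸ (hec.mul hc)).intervalIntegrable)]
    rw [hsplit] at this
    linarith
  -- Cauchy–Schwarz
  have hCS : (∫ x in a..b, e x * e'' x) ^ 2 ≤ X * Z := cs_integral hab.le hec hc
  have hY2 : Y ^ 2 ≤ X * Z := by rw [hibp]; simpa using hCS
  -- conclude
  have hgoal : X ≤ κ ^ 2 * Z := by
    rcases eq_or_lt_of_le hY0 with hY0' | hYpos
    · have : X ≤ 0 := by rw [← hY0'] at W1; linarith [W1]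
      have : X = 0 := le_antisymm this hX0
      rw [this]
      positivity
    · -- Y > 0 : from Y² ≤ XZ ≤ κYZ we get Y ≤ κZ
      have h1 : Y ^ 2 ≤ κ * Y * Z := by nlinarith [hY2, W1, hZ0]
      have h2 : Y ≤ κ * Z := by
        have := mul_le_mul_of_nonneg_left h1 (le_of_lt (inv_pos.2 hYpos))
        nlinarith [h1, hYpos]
      nlinarith [W1, h2, hκ0.le]
  calc X ≤ κ ^ 2 * Z := hgoal
    _ = ((b - a) / Real.pi) ^ 4 * Z := by rw [hκ]; ring

/-- Piecewise linear interpolant of `u` on the mesh `{0, 1/k, …, 1}`: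
on each mesh interval `[i/k, (i+1)/k)` it is the affine function agreeing with `u`
at the nodes `i/k` and `(i+1)/k`. -/
noncomputable def Ik (k : ℕ) (u : ℝ → ℝ) (x : ℝ) : ℝ :=
  u ((⌊x * k⌋ : ℝ) / k) +
    (u (((⌊x * k⌋ : ℝ) + 1) / k) - u ((⌊x * k⌋ : ℝ) / k)) * (x * k - (⌊x * k⌋ : ℝ))

/-- **L² interpolation error estimate.**  For `u` twice continuously differentiable
on `[0,1]` with `u 0 = u 1 = 0`, the piecewise linear interpolant on the mesh of
size `h = 1/k` satisfies `∫_0^1 (u - I_k u)² ≤ (h/π)⁴ ∫_0^1 u''²`. -/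
theorem interpolation_error_L2
    (k : ℕ) (hk : 1 ≤ k) (h : ℝ) (hh : h = 1 / k) (u u' u'' : ℝ → ℝ)
    (hderiv : ∀ x ∈ Set.Icc (0 : ℝ) 1, HasDerivWithinAt u (u' x) (Set.Icc (0 : ℝ) 1) x)
    (hderiv' : ∀ x ∈ Set.Icc (0 : ℝ) 1, HasDerivWithinAt u' (u'' x) (Set.Icc (0 : ℝ) 1) x)
    (hcont : ContinuousOn u'' (Set.Icc (0 : ℝ) 1))
    (h0 : u 0 = 0) (h1 : u 1 = 0) :
    ∫ x in (0 : ℝ)..1, (u x - Ik k u x) ^ 2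
      ≤ (h / Real.pi) ^ 4 * ∫ x in (0 : ℝ)..1, (u'' x) ^ 2 := by
  have hk0 : (0:ℝ) < k := by exact_mod_cast hk
  have hkne : (k:ℝ) ≠ 0 := hk0.ne'
  set nd : ℕ → ℝ := fun i => (i:ℝ) / k with hnd
  have hnd0 : nd 0 = 0 := by simp [hnd]
  have hndk : nd k = 1 := by simp [hnd, div_self hkne]
  have hstep : ∀ i : ℕ, nd (i+1) - nd i = h := by
    intro i
    simp only [hnd]
    push_cast
    rw [hh]
    field_simp
    ring
  have hmono : ∀ i : ℕ, nd i < nd (i+1) := by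
    intro i
    have := hstep i
    have hhpos : 0 < h := by rw [hh]; positivity
    linarith
  have hsub : ∀ i : ℕ, i < k → Set.Icc (nd i) (nd (i+1)) ⊆ Set.Icc (0:ℝ) 1 := by
    intro i hi x hx
    constructor
    · have : (0:ℝ) ≤ nd i := by simp only [hnd]; positivity
      linarith [hx.1]
    · have : nd (i+1) ≤ 1 := by
        simp only [hnd]
        rw [div_le_one hk0]
        exact_mod_cast Nat.succ_le_of_lt hi
      linarith [hx.2]
  -- affine pieces
  set A : ℕ → ℝ → ℝ := fun i x =>
    u ((i:ℝ)/k) + (u (((i:ℝ)+1)/k) - u ((i:ℝ)/k)) * (x * k - i) with hA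
  set e : ℕ → ℝ → ℝ := fun i x => u x - A i x with he
  -- Ik agrees with the affine piece on the open interval
  have hIk : ∀ i : ℕ, ∀ x ∈ Set.Ioo (nd i) (nd (i+1)), Ik k u x = A i x := by
    intro i x hx
    have hfl : ⌊x * (k:ℝ)⌋ = (i:ℤ) := by
      have hx1 : (i:ℝ) < x * k := by
        have hq := hx.1
        simp only [hnd] at hq
        rwa [div_lt_iff₀ hk0] at hq
      have hx2 : x * k < (i:ℝ) + 1 := by
        have hq := hx.2
        simp only [hnd] at hq
        rw [lt_div_iff₀ hk0] at hq
        push_cast at hq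
        linarith
      rw [Int.floor_eq_iff]
      constructor
      · push_cast; linarith
      · push_cast; linarith
    simp only [Ik, hA, hfl]
    push_cast
    ring_nf
  -- the a.e. equality on each closed piece
  have hae : ∀ i : ℕ, ∀ᵐ x : ℝ, x ∈ Set.uIoc (nd i) (nd (i+1)) →
      (u x - Ik k u x) ^ 2 = e i x ^ 2 := by
    intro i
    have hne : ∀ᵐ x : ℝ, x ≠ nd (i+1) := by
      rw [MeasureTheory.ae_iff]
      have : {x : ℝ | ¬ x ≠ nd (i+1)} = {nd (i+1)} := by ext x; simp
      rw [this]
      exact measure_singleton _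
    filter_upwards [hne] with x hx hxI
    rw [Set.uIoc_of_le (hmono i).le] at hxI
    have hxo : x ∈ Set.Ioo (nd i) (nd (i+1)) := ⟨hxI.1, lt_of_le_of_ne hxI.2 hx⟩
    rw [he]
    simp only
    rw [hIk i x hxo]
  -- integrability of the error on each piece
  have heci : ∀ i : ℕ, i < k → ContinuousOn (e i) (Set.Icc (nd i) (nd (i+1))) := by
    intro i hi
    apply ContinuousOn.sub
    · exact (fun x hx => ((hderiv x (hsub i hi hx)).continuousWithinAt).mono (hsub i hi))
    · apply Continuous.continuousOn
      simp only [hA]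
      continuity
  have hint : ∀ i : ℕ, i < k →
      IntervalIntegrable (fun x => (u x - Ik k u x) ^ 2) volume (nd i) (nd (i+1)) := by
    intro i hi
    have hei : IntervalIntegrable (fun x => e i x ^ 2) volume (nd i) (nd (i+1)) := by
      apply ContinuousOn.intervalIntegrable
      rw [Set.uIcc_of_le (hmono i).le]
      exact (heci i hi).pow 2
    rw [intervalIntegrable_iff] at hei ⊢
    apply hei.congr
    filter_upwards [ae_restrict_of_ae (hae i), ae_restrict_mem measurableSet_uIoc]
      with x hx1 hx2
    exact (hx1 hx2).symm
  -- integral equality on each piece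
  have hieq : ∀ i : ℕ, i < k →
      (∫ x in (nd i)..(nd (i+1)), (u x - Ik k u x) ^ 2) =
        ∫ x in (nd i)..(nd (i+1)), e i x ^ 2 := by
    intro i hi
    apply intervalIntegral.integral_congr_ae
    exact hae i
  -- per-piece estimate
  have hpiece : ∀ i : ℕ, i < k →
      (∫ x in (nd i)..(nd (i+1)), e i x ^ 2) ≤
        (h / Real.pi) ^ 4 * ∫ x in (nd i)..(nd (i+1)), u'' x ^ 2 := by
    intro i hi
    have hd : ∀ x ∈ Set.Icc (nd i) (nd (i+1)),
        HasDerivWithinAt (e i) (u' x - (u (((i:ℝ)+1)/k) - u ((i:ℝ)/k)) * k)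
          (Set.Icc (nd i) (nd (i+1))) x := by
      intro x hx
      have h1 : HasDerivWithinAt u (u' x) (Set.Icc (nd i) (nd (i+1))) x :=
        (hderiv x (hsub i hi hx)).mono (hsub i hi)
      have h2 : HasDerivAt (A i) ((u (((i:ℝ)+1)/k) - u ((i:ℝ)/k)) * k) x := by
        simp only [hA]
        have := ((((hasDerivAt_id x).mul_const (k:ℝ)).sub_const (i:ℝ)).const_mul
          (u (((i:ℝ)+1)/k) - u ((i:ℝ)/k))).const_add (u ((i:ℝ)/k))
        simpa using this
      exact h1.sub h2.hasDerivWithinAt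
    have hd' : ∀ x ∈ Set.Icc (nd i) (nd (i+1)),
        HasDerivWithinAt (fun y => u' y - (u (((i:ℝ)+1)/k) - u ((i:ℝ)/k)) * k) (u'' x)
          (Set.Icc (nd i) (nd (i+1))) x := by
      intro x hx
      exact ((hderiv' x (hsub i hi hx)).mono (hsub i hi)).sub_const _
    have hc : ContinuousOn u'' (Set.Icc (nd i) (nd (i+1))) := hcont.mono (hsub i hi)
    have hea : e i (nd i) = 0 := by
      simp only [he, hA, hnd]
      rw [div_mul_cancel₀ _ hkne]
      ring
    have heb : e i (nd (i+1)) = 0 := by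
      simp only [he, hA, hnd]
      push_cast
      rw [div_mul_cancel₀ _ hkne]
      ring_nf
    have := key_interval (hmono i) hd hd' hc hea heb
    rwa [hstep i] at this
  -- sum up
  have hsum1 : (∫ x in (0:ℝ)..1, (u x - Ik k u x) ^ 2) =
      ∑ i ∈ Finset.range k, ∫ x in (nd i)..(nd (i+1)), (u x - Ik k u x) ^ 2 := by
    rw [intervalIntegral.sum_integral_adjacent_intervals (fun i hi => hint i hi)]
    rw [hnd0, hndk]
  have hint2 : ∀ i : ℕ, i < k →
      IntervalIntegrable (fun x => u'' x ^ 2) volume (nd i) (nd (i+1)) := by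
    intro i hi
    apply ContinuousOn.intervalIntegrable
    rw [Set.uIcc_of_le (hmono i).le]
    exact (hcont.mono (hsub i hi)).pow 2
  have hsum2 : (∫ x in (0:ℝ)..1, u'' x ^ 2) =
      ∑ i ∈ Finset.range k, ∫ x in (nd i)..(nd (i+1)), u'' x ^ 2 := by
    rw [intervalIntegral.sum_integral_adjacent_intervals (fun i hi => hint2 i hi)]
    rw [hnd0, hndk]
  rw [hsum1, hsum2, Finset.mul_sum]
  apply Finset.sum_le_sum
  intro i hi
  rw [hieq i (Finset.mem_range.1 hi)]
  exact hpiece i (Finset.mem_range.1 hi)
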